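/- Define for p_a ≠ p_b the signed scalar residual √2 R_*(p_a, p_b) = I_1(p_a,p_b)²/I_2(p_a,p_b) + p_a - p_b, where I_k(a,b) = ∫_{p_a}^{p_b} c(p)^{-k} dp. Then for any p_m strictly between p_a and p_b, √2(R_*(p_a,p_m) + R_*(p_m,p_b) - R_*(p_a,p_b)) = (I_1(a,m) I_2(m,b) - I_1(m,b) I_2(a,m))² / (I_2(a,m) I_2(m,b) (I_2(a,m) + I_2(m,b))), and the split residual strictly decreases in absolute value: |R_*(p_a,p_m) + R_*(p_m,p_b)| < |R_*(p_a,p_b)| whenever c is non-constant on the interval. -/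

import Mathlib

open intervalIntegral MeasureTheory Set

private lemma my_int (c : ℝ → ℝ) (hc : Continuous c) (hpos : ∀ p > 0, 0 < c p)
    (k : ℤ) {u v : ℝ} (hu : 0 < u) (hv : 0 < v) :
    IntervalIntegrable (fun p => (c p) ^ k) volume u v := by
  apply ContinuousOn.intervalIntegrable
  apply ContinuousOn.zpow₀ hc.continuousOn
  intro x hx
  exact Or.inl (ne_of_gt (hpos x ((lt_min hu hv).trans_le hx.1)))

private lemma my_pos (c : ℝ → ℝ) (hc : Continuous c) (hpos : ∀ p > 0, 0 < c p)
    (k : ℤ) {u v : ℝ} (hu : 0 < u) (huv : u < v) :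
    0 < ∫ p in u..v, (c p) ^ k :=
  intervalIntegral.intervalIntegral_pos_of_pos_on
    (my_int c hc hpos k hu (hu.trans huv))
    (fun x hx => zpow_pos (hpos x (hu.trans hx.1)) k) huv

private lemma my_ne (c : ℝ → ℝ) (hc : Continuous c) (hpos : ∀ p > 0, 0 < c p)
    (k : ℤ) {u v : ℝ} (hu : 0 < u) (hv : 0 < v) (huv : u ≠ v) :
    (∫ p in u..v, (c p) ^ k) ≠ 0 := by
  rcases huv.lt_or_gt with h | h
  · exact (my_pos c hc hpos k hu h).ne'
  · rw [intervalIntegral.integral_symm v u]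
    exact neg_ne_zero.mpr (my_pos c hc hpos k hv h).ne'

private lemma zp2 (t : ℝ) : t ^ (-2:ℤ) = (t ^ (-1:ℤ))^2 := by
  rw [← zpow_natCast (t ^ (-1:ℤ)) 2, ← zpow_mul]; norm_num

private lemma my_cs (c : ℝ → ℝ) (hc : Continuous c) (hpos : ∀ p > 0, 0 < c p)
    {u v : ℝ} (hu : 0 < u) (huv : u < v) :
    (∫ p in u..v, (c p) ^ (-1:ℤ))^2 ≤ (v - u) * ∫ p in u..v, (c p) ^ (-2:ℤ) := by
  have hv0 : 0 < v := hu.trans huv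
  set x1 := ∫ p in u..v, (c p) ^ (-1:ℤ) with hx1d
  set y1 := ∫ p in u..v, (c p) ^ (-2:ℤ) with hy1d
  have hy1 : 0 < y1 := my_pos c hc hpos (-2) hu huv
  set l := x1 / y1 with hl
  have expand : (∫ p in u..v, (l * (c p) ^ (-1:ℤ) - 1)^2)
      = l^2 * y1 - 2*l*x1 + (v - u) := by
    have e : (fun p => (l * (c p) ^ (-1:ℤ) - 1)^2)
        = fun p => l^2 * (c p) ^ (-2:ℤ) - 2*l*(c p) ^ (-1:ℤ) + 1 := by
      funext p; rw [zp2]; ring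
    rw [e, intervalIntegral.integral_add
          (((my_int c hc hpos (-2) hu hv0).const_mul (l^2)).sub
            ((my_int c hc hpos (-1) hu hv0).const_mul (2*l)))
          intervalIntegrable_const,
        intervalIntegral.integral_sub
          ((my_int c hc hpos (-2) hu hv0).const_mul (l^2))
          ((my_int c hc hpos (-1) hu hv0).const_mul (2*l)),
        intervalIntegral.integral_const_mul, intervalIntegral.integral_const_mul,
        intervalIntegral.integral_const]
    rw [smul_eq_mul, mul_one, ← hx1d, ← hy1d]
  have key : 0 ≤ l^2 * y1 - 2*l*x1 + (v - u) := by
    rw [← expand]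
    exact intervalIntegral.integral_nonneg huv.le (fun x _ => sq_nonneg _)
  have h' : l^2 * y1 - 2*l*x1 + (v - u) = (v - u) - x1^2/y1 := by
    rw [hl]; field_simp; ring
  rw [h'] at key
  have : x1^2 / y1 ≤ v - u := by linarith
  calc x1^2 = (x1^2/y1) * y1 := by field_simp
  _ ≤ (v - u) * y1 := by nlinarith

private lemma my_cmp (c : ℝ → ℝ) (hc : Continuous c) (hpos : ∀ p > 0, 0 < c p)
    (hmono : StrictMonoOn c (Set.Ioi 0)) {a m b : ℝ} (ha : 0 < a) (h1 : a < m) (h2 : m < b) :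
    (∫ p in a..m, (c p)^(-1:ℤ)) * (∫ p in m..b, (c p)^(-2:ℤ))
      < (∫ p in m..b, (c p)^(-1:ℤ)) * (∫ p in a..m, (c p)^(-2:ℤ)) := by
  have hm0 : 0 < m := ha.trans h1
  have hb0 : 0 < b := hm0.trans h2
  have hY1 := my_pos c hc hpos (-2) ha h1
  have hY2 := my_pos c hc hpos (-2) hm0 h2
  have hL : 0 < ∫ p in a..m, (c m * (c p)^(-2:ℤ) - (c p)^(-1:ℤ)) := by
    apply intervalIntegral.intervalIntegral_pos_of_pos_on
    · exact ((my_int c hc hpos (-2) ha hm0).const_mul _).sub (my_int c hc hpos (-1) ha hm0)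
    · intro x hx
      have hx0 : 0 < c x := hpos x (ha.trans hx.1)
      have hcm : c x < c m := hmono (mem_Ioi.mpr (ha.trans hx.1)) (mem_Ioi.mpr hm0) hx.2
      rw [zp2, zpow_neg_one]
      have ht : 0 < (c x)⁻¹ := inv_pos.mpr hx0
      have e3 : c x * ((c x)⁻¹)^2 = (c x)⁻¹ := by field_simp
      nlinarith [mul_pos (mul_pos ht ht) (sub_pos.mpr hcm), e3]
    · exact h1
  have hR : 0 < ∫ p in m..b, ((c p)^(-1:ℤ) - c m * (c p)^(-2:ℤ)) := by
    apply intervalIntegral.intervalIntegral_pos_of_pos_on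
    · exact (my_int c hc hpos (-1) hm0 hb0).sub ((my_int c hc hpos (-2) hm0 hb0).const_mul _)
    · intro x hx
      have hx0 : 0 < c x := hpos x (hm0.trans hx.1)
      have hcm : c m < c x := hmono (mem_Ioi.mpr hm0) (mem_Ioi.mpr (hm0.trans hx.1)) hx.1
      rw [zp2, zpow_neg_one]
      have ht : 0 < (c x)⁻¹ := inv_pos.mpr hx0
      have e3 : c x * ((c x)⁻¹)^2 = (c x)⁻¹ := by field_simp
      nlinarith [mul_pos (mul_pos ht ht) (sub_pos.mpr hcm), e3]
    · exact h2
  have eL : (∫ p in a..m, (c m * (c p)^(-2:ℤ) - (c p)^(-1:ℤ)))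
      = c m * (∫ p in a..m, (c p)^(-2:ℤ)) - ∫ p in a..m, (c p)^(-1:ℤ) := by
    rw [intervalIntegral.integral_sub ((my_int c hc hpos (-2) ha hm0).const_mul _)
          (my_int c hc hpos (-1) ha hm0),
        intervalIntegral.integral_const_mul]
  have eR : (∫ p in m..b, ((c p)^(-1:ℤ) - c m * (c p)^(-2:ℤ)))
      = (∫ p in m..b, (c p)^(-1:ℤ)) - c m * ∫ p in m..b, (c p)^(-2:ℤ) := by
    rw [intervalIntegral.integral_sub (my_int c hc hpos (-1) hm0 hb0)
          ((my_int c hc hpos (-2) hm0 hb0).const_mul _),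
        intervalIntegral.integral_const_mul]
  rw [eL] at hL
  rw [eR] at hR
  nlinarith [mul_lt_mul_of_pos_right (show (∫ p in a..m, (c p)^(-1:ℤ)) < c m * ∫ p in a..m, (c p)^(-2:ℤ) by linarith) hY2,
             mul_lt_mul_of_pos_left (show c m * (∫ p in m..b, (c p)^(-2:ℤ)) < ∫ p in m..b, (c p)^(-1:ℤ) by linarith) hY1]

private lemma alg_id (x1 x2 y1 y2 a m b : ℝ) (hy1 : y1 ≠ 0) (hy2 : y2 ≠ 0) (h12 : y1 + y2 ≠ 0) :
    Real.sqrt 2 * ((x1^2/y1 + a - m)/Real.sqrt 2 + (x2^2/y2 + m - b)/Real.sqrt 2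
        - ((x1+x2)^2/(y1+y2) + a - b)/Real.sqrt 2)
      = (x1*y2 - x2*y1)^2/(y1*y2*(y1+y2)) := by
  have hs : Real.sqrt 2 ≠ 0 := ne_of_gt (Real.sqrt_pos.mpr (by norm_num))
  field_simp
  ring

private lemma alg_lt (x1 x2 y1 y2 a m b : ℝ) (hy1 : 0 < y1) (hy2 : 0 < y2)
    (hcs1 : x1^2 ≤ (m-a)*y1) (hcs2 : x2^2 ≤ (b-m)*y2)
    (hD : x1*y2 < x2*y1) :
    |(x1^2/y1 + a - m)/Real.sqrt 2 + (x2^2/y2 + m - b)/Real.sqrt 2|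
      < |((x1+x2)^2/(y1+y2) + a - b)/Real.sqrt 2| := by
  have hs : (0:ℝ) < Real.sqrt 2 := Real.sqrt_pos.mpr (by norm_num)
  have hy12 : 0 < y1 + y2 := by linarith
  have hA : x1^2/y1 ≤ m - a := (div_le_iff₀ hy1).mpr hcs1
  have hB : x2^2/y2 ≤ b - m := (div_le_iff₀ hy2).mpr hcs2
  have hDneg : x1*y2 - x2*y1 < 0 := by linarith
  have hDsq : 0 < (x1*y2 - x2*y1)^2 := by
    rw [sq]; exact mul_pos_of_neg_of_neg hDneg hDneg
  have hDpos : 0 < (x1*y2 - x2*y1)^2/(y1*y2*(y1+y2)) :=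
    div_pos hDsq (by positivity)
  have hC : (x1+x2)^2/(y1+y2) + a - b
      = (x1^2/y1 + a - m) + (x2^2/y2 + m - b) - (x1*y2 - x2*y1)^2/(y1*y2*(y1+y2)) := by
    field_simp
    ring
  have h1 : (x1^2/y1 + a - m)/Real.sqrt 2 + (x2^2/y2 + m - b)/Real.sqrt 2
      = ((x1^2/y1 + a - m) + (x2^2/y2 + m - b))/Real.sqrt 2 := by ring
  have hAB : (x1^2/y1 + a - m) + (x2^2/y2 + m - b) ≤ 0 := by linarith
  have hC0 : (x1+x2)^2/(y1+y2) + a - b < 0 := by rw [hC]; linarith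
  rw [h1, abs_div, abs_div, abs_of_pos hs]
  gcongr
  rw [abs_of_nonpos hAB, abs_of_nonpos hC0.le]
  linarith

private lemma core_ineq (c : ℝ → ℝ) (hc : Continuous c) (hpos : ∀ p > 0, 0 < c p)
    (hmono : StrictMonoOn c (Set.Ioi 0)) {a m b : ℝ} (ha : 0 < a) (h1 : a < m) (h2 : m < b) :
    |((∫ p in a..m, (c p)^(-1:ℤ))^2 / (∫ p in a..m, (c p)^(-2:ℤ)) + a - m)/Real.sqrt 2
        + ((∫ p in m..b, (c p)^(-1:ℤ))^2 / (∫ p in m..b, (c p)^(-2:ℤ)) + m - b)/Real.sqrt 2|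
      < |((∫ p in a..b, (c p)^(-1:ℤ))^2 / (∫ p in a..b, (c p)^(-2:ℤ)) + a - b)/Real.sqrt 2| := by
  have hm0 : 0 < m := ha.trans h1
  have hb0 : 0 < b := hm0.trans h2
  have hadd1 : (∫ p in a..m, (c p)^(-1:ℤ)) + (∫ p in m..b, (c p)^(-1:ℤ))
      = ∫ p in a..b, (c p)^(-1:ℤ) :=
    intervalIntegral.integral_add_adjacent_intervals
      (my_int c hc hpos _ ha hm0) (my_int c hc hpos _ hm0 hb0)
  have hadd2 : (∫ p in a..m, (c p)^(-2:ℤ)) + (∫ p in m..b, (c p)^(-2:ℤ))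
      = ∫ p in a..b, (c p)^(-2:ℤ) :=
    intervalIntegral.integral_add_adjacent_intervals
      (my_int c hc hpos _ ha hm0) (my_int c hc hpos _ hm0 hb0)
  rw [← hadd1, ← hadd2]
  exact alg_lt _ _ _ _ a m b (my_pos c hc hpos (-2) ha h1) (my_pos c hc hpos (-2) hm0 h2)
    (my_cs c hc hpos ha h1) (my_cs c hc hpos hm0 h2) (my_cmp c hc hpos hmono ha h1 h2)

/-- Splitting a monotone simple wave decreases the residual: the exact algebraic
identity for the difference of residuals, and the strict decrease of the absolute
split residual. -/
theorem split_residual_decreases (c : ℝ → ℝ) (hc : Continuous c)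
    (hpos : ∀ p > 0, 0 < c p)
    (hmono : StrictMonoOn c (Set.Ioi 0))
    (pa pb pm : ℝ) (hpa : 0 < pa) (hpb : 0 < pb) (hne : pa ≠ pb)
    (hm : pm ∈ Set.Ioo (min pa pb) (max pa pb)) :
    let I : ℕ → ℝ → ℝ → ℝ := fun k a b => ∫ p in a..b, (c p)^(-(k:ℤ))
    let R : ℝ → ℝ → ℝ := fun a b => ((I 1 a b)^2 / I 2 a b + a - b) / Real.sqrt 2
    (Real.sqrt 2 * (R pa pm + R pm pb - R pa pb) =
      (I 1 pa pm * I 2 pm pb - I 1 pm pb * I 2 pa pm)^2 /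
        (I 2 pa pm * I 2 pm pb * (I 2 pa pm + I 2 pm pb))) ∧
    |R pa pm + R pm pb| < |R pa pb| := by
  intro I R
  have hI : I = fun (k : ℕ) (a b : ℝ) => ∫ p in a..b, (c p)^(-(k:ℤ)) := rfl
  have hR : R = fun a b => ((I 1 a b)^2 / I 2 a b + a - b) / Real.sqrt 2 := rfl
  simp only [hR, hI, Nat.cast_one, Nat.cast_ofNat]
  have hm0 : 0 < pm := (lt_min hpa hpb).trans hm.1
  constructor
  · -- the exact identity
    have hadd1 : (∫ p in pa..pm, (c p)^(-1:ℤ)) + (∫ p in pm..pb, (c p)^(-1:ℤ))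
        = ∫ p in pa..pb, (c p)^(-1:ℤ) :=
      intervalIntegral.integral_add_adjacent_intervals
        (my_int c hc hpos _ hpa hm0) (my_int c hc hpos _ hm0 hpb)
    have hadd2 : (∫ p in pa..pm, (c p)^(-2:ℤ)) + (∫ p in pm..pb, (c p)^(-2:ℤ))
        = ∫ p in pa..pb, (c p)^(-2:ℤ) :=
      intervalIntegral.integral_add_adjacent_intervals
        (my_int c hc hpos _ hpa hm0) (my_int c hc hpos _ hm0 hpb)
    have hnem : pa ≠ pm ∧ pm ≠ pb := by
      rcases hne.lt_or_gt with h | h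
      · rw [min_eq_left h.le, max_eq_right h.le] at hm
        exact ⟨hm.1.ne, hm.2.ne⟩
      · rw [min_eq_right h.le, max_eq_left h.le] at hm
        exact ⟨hm.2.ne', hm.1.ne'⟩
    rw [← hadd1, ← hadd2]
    have h12 : (∫ p in pa..pm, (c p)^(-2:ℤ)) + (∫ p in pm..pb, (c p)^(-2:ℤ)) ≠ 0 := by
      rw [hadd2]; exact my_ne c hc hpos (-2) hpa hpb hne
    exact alg_id _ _ _ _ pa pm pb (my_ne c hc hpos (-2) hpa hm0 hnem.1)
      (my_ne c hc hpos (-2) hm0 hpb hnem.2) h12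
  · -- the strict decrease
    rcases hne.lt_or_gt with h | h
    · rw [min_eq_left h.le, max_eq_right h.le] at hm
      exact core_ineq c hc hpos hmono hpa hm.1 hm.2
    · rw [min_eq_right h.le, max_eq_left h.le] at hm
      have hlt := core_ineq c hc hpos hmono hpb hm.1 hm.2
      rw [intervalIntegral.integral_symm pm pa (f := fun p => (c p)^(-1:ℤ)),
          intervalIntegral.integral_symm pm pa (f := fun p => (c p)^(-2:ℤ)),
          intervalIntegral.integral_symm pb pm (f := fun p => (c p)^(-1:ℤ)),
          intervalIntegral.integral_symm pb pm (f := fun p => (c p)^(-2:ℤ)),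
          intervalIntegral.integral_symm pb pa (f := fun p => (c p)^(-1:ℤ)),
          intervalIntegral.integral_symm pb pa (f := fun p => (c p)^(-2:ℤ))]
      set u1 := ∫ p in pb..pm, (c p)^(-1:ℤ) with hu1
      set u2 := ∫ p in pb..pm, (c p)^(-2:ℤ) with hu2
      set v1 := ∫ p in pm..pa, (c p)^(-1:ℤ) with hv1
      set v2 := ∫ p in pm..pa, (c p)^(-2:ℤ) with hv2
      set w1 := ∫ p in pb..pa, (c p)^(-1:ℤ) with hw1
      set w2 := ∫ p in pb..pa, (c p)^(-2:ℤ) with hw2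
      rw [show ((-v1)^2/(-v2) + pa - pm)/Real.sqrt 2 + ((-u1)^2/(-u2) + pm - pb)/Real.sqrt 2
            = -((u1^2/u2 + pb - pm)/Real.sqrt 2 + (v1^2/v2 + pm - pa)/Real.sqrt 2) from by ring,
          show ((-w1)^2/(-w2) + pa - pb)/Real.sqrt 2
            = -((w1^2/w2 + pb - pa)/Real.sqrt 2) from by ring,
          abs_neg, abs_neg]
      exact hlt
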